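/- I_Δ^k · I_2((I_k(M))_D) ⊆ I_{2k}(M_D) at (x,x), where I_Δ is the ideal of the diagonal generated by {z_i − z'_i : i=1,...,n}. -/
import Mathlib


/-- The generator matrix `[M_D] = [[M], 0; [M]', Δ·[M]']` of the double `M_D`. -/
def Lip.doubleMatrix {R S : Type*} [CommRing R] [CommRing S] {p r n : ℕ}
    (φ1 φ2 : R →+* S) (z : Fin n → R) (g : Fin r → (Fin p → R)) :
    Matrix (Fin p ⊕ Fin p) (Fin r ⊕ Fin n × Fin r) S :=
  fun i c =>
    match i, c with
    | Sum.inl i, Sum.inl j => φ1 (g j i)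
    | Sum.inr i, Sum.inl j => φ2 (g j i)
    | Sum.inl _, Sum.inr _ => 0
    | Sum.inr i, Sum.inr (a, j) => (φ1 (z a) - φ2 (z a)) * φ2 (g j i)

/-- The ideal `I_{2k}(M_D)` of `2k×2k` minors of the generator matrix of the double. -/
def Lip.I2k {R S : Type*} [CommRing R] [CommRing S] {p r n : ℕ}
    (φ1 φ2 : R →+* S) (z : Fin n → R) (g : Fin r → (Fin p → R)) (k : ℕ) : Ideal S :=
  Ideal.span {d : S | ∃ (RI : Fin (2 * k) → Fin p ⊕ Fin p)
      (CJ : Fin (2 * k) → Fin r ⊕ Fin n × Fin r),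
    d = Matrix.det (Matrix.of fun a b : Fin (2 * k) =>
      Lip.doubleMatrix φ1 φ2 z g (RI a) (CJ b))}

/-- The generator matrix of the double `(I_k(M))_D` of the minor ideal `I_k(M)`: its
columns are the `(det M_{IJ}, det M'_{IJ})` together with the
`(0, (z i − z' i)·det M'_{KL})`, indexed by `k`-indexes `(I, J)`. -/
def Lip.minorDoubleMatrix {R S : Type*} [CommRing R] [CommRing S] {p r n : ℕ}
    (φ1 φ2 : R →+* S) (z : Fin n → R) (g : Fin r → (Fin p → R)) (k : ℕ) :
    Matrix (Fin 2) (((Fin k → Fin p) × (Fin k → Fin r)) ⊕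
      (Fin n × ((Fin k → Fin p) × (Fin k → Fin r)))) S :=
  fun i c =>
    match i, c with
    | 0, Sum.inl (I, J) => φ1 (Matrix.det (Matrix.of fun a b : Fin k => g (J b) (I a)))
    | 1, Sum.inl (I, J) => φ2 (Matrix.det (Matrix.of fun a b : Fin k => g (J b) (I a)))
    | 0, Sum.inr _ => 0
    | 1, Sum.inr (i, (K, L)) =>
        (φ1 (z i) - φ2 (z i)) * φ2 (Matrix.det (Matrix.of fun a b : Fin k => g (L b) (K a)))

/-- The ideal of `2×2` minors of a `2`-row matrix. -/
def Lip.I2 {S : Type*} [CommRing S] {ι : Type*} (E : Matrix (Fin 2) ι S) : Ideal S :=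
  Ideal.span {d : S | ∃ c1 c2 : ι, d = E 0 c1 * E 1 c2 - E 0 c2 * E 1 c1}

/-- `I_Δ^k · I_2((I_k(M))_D) ⊆ I_{2k}(M_D)`, where `I_Δ` is the ideal of the diagonal,
generated by the `z i − z' i`. -/
lemma span_range_pow_le {S : Type*} [CommRing S] {ι : Type*} (v : ι → S) (j : ℕ) :
    (Ideal.span (Set.range v)) ^ j ≤
      Ideal.span {x : S | ∃ a : Fin j → ι, x = ∏ t, v (a t)} := by
  induction j with
  | zero =>
    intro x hx
    rw [pow_zero, Ideal.one_eq_top] at hx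
    have h1 : (1 : S) ∈ Ideal.span {x : S | ∃ a : Fin 0 → ι, x = ∏ t, v (a t)} :=
      Ideal.subset_span ⟨Fin.elim0, by simp⟩
    simpa using Ideal.mul_mem_left _ x h1
  | succ j ih =>
    rw [pow_succ]
    calc (Ideal.span (Set.range v)) ^ j * Ideal.span (Set.range v)
        ≤ Ideal.span {x : S | ∃ a : Fin j → ι, x = ∏ t, v (a t)} *
          Ideal.span (Set.range v) := Ideal.mul_mono_left ih
      _ ≤ _ := by
          rw [Ideal.span_mul_span']
          apply Ideal.span_mono
          rintro x ⟨px, ⟨b, rfl⟩, qx, ⟨i, rfl⟩, rfl⟩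
          refine ⟨Fin.snoc b i, ?_⟩
          have h2 : (∏ t : Fin (j + 1), v ((Fin.snoc b i : Fin (j + 1) → ι) t)) =
              (∏ t : Fin j, v (b t)) * v i := by
            have h3 := Fin.prod_snoc (v i) (v ∘ b)
            rw [← Fin.comp_snoc] at h3
            simpa [Function.comp] using h3
          exact h2.symm

lemma Lip.key {R S : Type*} [CommRing R] [CommRing S] {p r n k : ℕ}
    (φ1 φ2 : R →+* S) (z : Fin n → R) (g : Fin r → (Fin p → R))
    (I I' : Fin k → Fin p) (J J' : Fin k → Fin r) (a : Fin k → Fin n) :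
    (∏ t, (φ1 (z (a t)) - φ2 (z (a t)))) *
      (φ1 (Matrix.det (Matrix.of fun s t : Fin k => g (J t) (I s))) *
       φ2 (Matrix.det (Matrix.of fun s t : Fin k => g (J' t) (I' s))))
      ∈ Lip.I2k φ1 φ2 z g k := by
  apply Ideal.subset_span
  let e : Fin (2 * k) ≃ Fin k ⊕ Fin k :=
    (finSumFinEquiv.trans (finCongr (two_mul k).symm)).symm
  refine ⟨Sum.map I I' ∘ e, (Sum.elim (Sum.inl ∘ J) fun t => Sum.inr (a t, J' t)) ∘ e, ?_⟩
  have h0 : (Matrix.of fun x y : Fin k ⊕ Fin k =>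
      Lip.doubleMatrix φ1 φ2 z g (Sum.map I I' x)
        (Sum.elim (Sum.inl ∘ J) (fun t => Sum.inr (a t, J' t)) y)) =
      Matrix.fromBlocks
        ((Matrix.of fun s t : Fin k => g (J t) (I s)).map φ1) 0
        ((Matrix.of fun s t : Fin k => g (J t) (I' s)).map φ2)
        (Matrix.of fun s t : Fin k =>
          (φ1 (z (a t)) - φ2 (z (a t))) *
            ((Matrix.of fun s t : Fin k => g (J' t) (I' s)).map φ2) s t) := by
    ext x y
    rcases x with s | s <;> rcases y with t | t <;>
      simp [Lip.doubleMatrix, Matrix.fromBlocks]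
  have h1 : (Matrix.of fun x y : Fin (2 * k) =>
      Lip.doubleMatrix φ1 φ2 z g ((Sum.map I I' ∘ e) x)
        (((Sum.elim (Sum.inl ∘ J) fun t => Sum.inr (a t, J' t)) ∘ e) y)) =
      (Matrix.of fun x y : Fin k ⊕ Fin k =>
        Lip.doubleMatrix φ1 φ2 z g (Sum.map I I' x)
          (Sum.elim (Sum.inl ∘ J) (fun t => Sum.inr (a t, J' t)) y)).submatrix e e := rfl
  rw [h1, h0, Matrix.det_submatrix_equiv_self, Matrix.det_fromBlocks_zero₁₂,
    Matrix.det_mul_row, RingHom.map_det φ1, RingHom.map_det φ2, RingHom.mapMatrix_apply,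
    RingHom.mapMatrix_apply]
  ring

theorem diagPow_mul_I2_le_I2k {R S : Type*} [CommRing R] [CommRing S] {p r n k : ℕ}
    (φ1 φ2 : R →+* S) (z : Fin n → R) (g : Fin r → (Fin p → R)) :
    (Ideal.span (Set.range fun i => φ1 (z i) - φ2 (z i))) ^ k *
        Lip.I2 (Lip.minorDoubleMatrix φ1 φ2 z g k)
      ≤ Lip.I2k φ1 φ2 z g k := by
  rw [Ideal.mul_le]
  intro x hx y hy
  have hx' : x ∈ Ideal.span
      {w : S | ∃ a : Fin k → Fin n, w = ∏ t, (φ1 (z (a t)) - φ2 (z (a t)))} :=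
    span_range_pow_le (fun i => φ1 (z i) - φ2 (z i)) k hx
  clear hx
  induction hx' using Submodule.span_induction with
  | zero => simpa using (Lip.I2k φ1 φ2 z g k).zero_mem
  | add u w _ _ hu hw => rw [add_mul]; exact Ideal.add_mem _ hu hw
  | smul c u _ hu => rw [smul_eq_mul, mul_assoc]; exact Ideal.mul_mem_left _ _ hu
  | mem u hu =>
    obtain ⟨a, rfl⟩ := hu
    induction hy using Submodule.span_induction with
    | zero => simpa using (Lip.I2k φ1 φ2 z g k).zero_mem
    | add u w _ _ hu hw => rw [mul_add]; exact Ideal.add_mem _ hu hw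
    | smul c u _ hu =>
      rw [smul_eq_mul, mul_comm c u, ← mul_assoc]
      exact Ideal.mul_mem_right _ _ hu
    | mem d hd =>
      obtain ⟨c1, c2, rfl⟩ := hd
      rcases c1 with ⟨I, J⟩ | ⟨i, K, L⟩ <;> rcases c2 with ⟨I', J'⟩ | ⟨i', K', L'⟩ <;>
        simp only [Lip.minorDoubleMatrix, Matrix.of_apply, mul_sub, zero_mul, mul_zero,
          sub_zero, zero_sub]
      · refine sub_mem ?_ ?_
        · have h := Lip.key φ1 φ2 z g I I' J J' a
          have e : (∏ t, (φ1 (z (a t)) - φ2 (z (a t)))) *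
              (φ1 (Matrix.det (Matrix.of fun s t : Fin k => g (J t) (I s))) *
               φ2 (Matrix.det (Matrix.of fun s t : Fin k => g (J' t) (I' s)))) =
              (∏ t, (φ1 (z (a t)) - φ2 (z (a t)))) *
              (φ1 ((Matrix.of fun s t : Fin k => g (J t) (I s)).det) *
               φ2 ((Matrix.of fun s t : Fin k => g (J' t) (I' s)).det)) := rfl
          rw [e] at h
          exact h
        · exact Lip.key φ1 φ2 z g I' I J' J a
      · have h := Lip.key φ1 φ2 z g I K' J L' a
        have e2 : (∏ t, (φ1 (z (a t)) - φ2 (z (a t)))) *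
            (φ1 ((Matrix.of fun s t : Fin k => g (J t) (I s)).det) *
              ((φ1 (z i') - φ2 (z i')) *
                φ2 ((Matrix.of fun s t : Fin k => g (L' t) (K' s)).det))) =
            (φ1 (z i') - φ2 (z i')) *
            ((∏ t, (φ1 (z (a t)) - φ2 (z (a t)))) *
            (φ1 ((Matrix.of fun s t : Fin k => g (J t) (I s)).det) *
              φ2 ((Matrix.of fun s t : Fin k => g (L' t) (K' s)).det))) := by ring
        rw [e2]
        exact Ideal.mul_mem_left _ _ h
      · have h := Lip.key φ1 φ2 z g I' K J' L a
        have e2 : (∏ t, (φ1 (z (a t)) - φ2 (z (a t)))) *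
            -(φ1 ((Matrix.of fun s t : Fin k => g (J' t) (I' s)).det) *
              ((φ1 (z i) - φ2 (z i)) *
                φ2 ((Matrix.of fun s t : Fin k => g (L t) (K s)).det))) =
            -((φ1 (z i) - φ2 (z i)) *
            ((∏ t, (φ1 (z (a t)) - φ2 (z (a t)))) *
            (φ1 ((Matrix.of fun s t : Fin k => g (J' t) (I' s)).det) *
              φ2 ((Matrix.of fun s t : Fin k => g (L t) (K s)).det)))) := by ring
        rw [e2]
        exact neg_mem (Ideal.mul_mem_left _ _ h)
      · simpa using (Lip.I2k φ1 φ2 z g k).zero_mem
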